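/- Let Ω ⊆ ℝ^d be an open convex set and let u : Ω → ℝ be continuously differentiable. Suppose that for all x, y ∈ Ω with x ≠ y, (y − x) · ∇u(x) ≤ 0 implies u(y) < u(x). Then u is strictly quasiconcave on Ω. -/

import Mathlib

/-- If `u` is `C¹` on an open convex `Ω` and for all `x ≠ y` in `Ω`,
`(y − x) · ∇u(x) ≤ 0` implies `u(y) < u(x)`, then `u` is strictly quasiconcave on `Ω`. -/
theorem stmt_5 {d : ℕ} (Ω : Set (EuclideanSpace ℝ (Fin d)))
    (hΩo : IsOpen Ω) (hΩc : Convex ℝ Ω)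
    (u : EuclideanSpace ℝ (Fin d) → ℝ) (hu : ContDiffOn ℝ 1 u Ω)
    (h : ∀ x ∈ Ω, ∀ y ∈ Ω, x ≠ y → (inner ℝ (y - x) (gradient u x) : ℝ) ≤ 0 → u y < u x) :
    ∀ x ∈ Ω, ∀ y ∈ Ω, x ≠ y → ∀ l : ℝ, 0 < l → l < 1 →
      min (u x) (u y) < u (l • x + (1 - l) • y) := by
  intro x hx y hy hxy l hl0 hl1
  set z := l • x + (1 - l) • y with hz
  have hzΩ : z ∈ Ω := hΩc hx hy (le_of_lt hl0) (by linarith) (by ring)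
  by_contra hcon
  push_neg at hcon
  have hux : u z ≤ u x := le_trans hcon (min_le_left _ _)
  have huy : u z ≤ u y := le_trans hcon (min_le_right _ _)
  have hxz : x - z = (1 - l) • (x - y) := by
    rw [hz]; module
  have hyz : y - z = l • (y - x) := by
    rw [hz]; module
  have hzx : z ≠ x := by
    intro hzx
    apply hxy
    have : (1 - l) • (x - y) = 0 := by rw [← hxz, hzx, sub_self]
    have hxy0 : x - y = 0 := by
      rcases smul_eq_zero.mp this with h' | h'
      · exact absurd h' (by intro hh; linarith)
      · exact h'
    exact sub_eq_zero.mp hxy0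
  have hzy : z ≠ y := by
    intro hzy
    apply hxy
    have : l • (y - x) = 0 := by rw [← hyz, hzy, sub_self]
    have hxy0 : y - x = 0 := by
      rcases smul_eq_zero.mp this with h' | h'
      · exact absurd h' (ne_of_gt hl0)
      · exact h'
    exact (sub_eq_zero.mp hxy0).symm
  have h1 : (0 : ℝ) < inner ℝ (x - z) (gradient u z) := by
    by_contra hle
    push_neg at hle
    exact absurd (h z hzΩ x hx hzx hle) (not_lt.mpr hux)
  have h2 : (0 : ℝ) < inner ℝ (y - z) (gradient u z) := by
    by_contra hle
    push_neg at hle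
    exact absurd (h z hzΩ y hy hzy hle) (not_lt.mpr huy)
  rw [hxz, real_inner_smul_left] at h1
  rw [hyz, real_inner_smul_left] at h2
  have hneg : (inner ℝ (y - x) (gradient u z) : ℝ) = - inner ℝ (x - y) (gradient u z) := by
    rw [← inner_neg_left, neg_sub]
  rw [hneg] at h2
  have hA : (0 : ℝ) < inner ℝ (x - y) (gradient u z) := by nlinarith
  nlinarith
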